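/- Let k be odd and n = 2km with m ≥ 2, and define J = J_0 ∪ J_1 ∪ J_2 ∪ J_3 as a set of entries of B_n where J_0 = {(i, 2jm+i−1, i + (2jm+i−1) mod n) : 1 ≤ i ≤ m, 0 ≤ j ≤ k−1}, J_1 = {(i, 2jm+i, ...) : m ≤ i ≤ 2m−1, 0 ≤ j ≤ k−1}, J_2 = {(2m(2ℓ−1)+i, 2jm+i, ...) : 0 ≤ i ≤ 2m−1, 0 ≤ j ≤ k−1, 1 ≤ ℓ ≤ (k−1)/2}, J_3 = {(4mℓ+i, 2jm+i+1, ...) : 0 ≤ i ≤ 2m−1, 0 ≤ j ≤ k−1, 1 ≤ ℓ ≤ (k−1)/2} (columns taken mod n, symbol = row+column mod n). Then each column of B_n contains exactly k elements of J, each symbol appears in exactly k elements of J, and each row contains exactly k elements of J except row 0 which contains none and row m which contains 2k elements. -/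

import Mathlib

open scoped Classical

/-- A latin square of order `n`: each symbol occurs exactly once in each row and column. -/
def IsLatinSquare {n : ℕ} (L : Fin n → Fin n → Fin n) : Prop :=
  (∀ i, Function.Bijective fun j => L i j) ∧ (∀ j, Function.Bijective fun i => L i j)

/-- A `k`-plex of `L`: a set of cells with exactly `k` in each row, `k` in each column,
and each symbol occurring exactly `k` times. -/
def IsPlex {n : ℕ} (L : Fin n → Fin n → Fin n) (k : ℕ) (K : Finset (Fin n × Fin n)) : Prop :=
  (∀ i, (K.filter fun p => p.1 = i).card = k) ∧
  (∀ j, (K.filter fun p => p.2 = j).card = k) ∧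
  (∀ s, (K.filter fun p => L p.1 p.2 = s).card = k)

/-- `L` has a transversal, i.e. a `1`-plex. -/
def HasTransversal {n : ℕ} (L : Fin n → Fin n → Fin n) : Prop :=
  ∃ K, IsPlex L 1 K

/-- The set `J = J₀ ∪ J₁ ∪ J₂ ∪ J₃` of cells of `Bₙ`, for `n = 2km`. -/
def InJ (k m n : ℕ) (p : Fin n × Fin n) : Prop :=
  (∃ i j, 1 ≤ i ∧ i ≤ m ∧ j < k ∧
    (p.1 : ℕ) = i ∧ (p.2 : ℕ) = (2 * j * m + i - 1) % n) ∨
  (∃ i j, m ≤ i ∧ i ≤ 2 * m - 1 ∧ j < k ∧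
    (p.1 : ℕ) = i ∧ (p.2 : ℕ) = (2 * j * m + i) % n) ∨
  (∃ i j l, i ≤ 2 * m - 1 ∧ j < k ∧ 1 ≤ l ∧ l ≤ (k - 1) / 2 ∧
    (p.1 : ℕ) = (2 * m * (2 * l - 1) + i) % n ∧ (p.2 : ℕ) = (2 * j * m + i) % n) ∨
  (∃ i j l, i ≤ 2 * m - 1 ∧ j < k ∧ 1 ≤ l ∧ l ≤ (k - 1) / 2 ∧
    (p.1 : ℕ) = (4 * m * l + i) % n ∧ (p.2 : ℕ) = (2 * j * m + i + 1) % n)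

set_option maxHeartbeats 1000000

lemma modHelper (m q e : ℕ) (h : e < 2*m) : (2*m*q + e) % (2*m) = e := by
  rw [Nat.add_comm, Nat.add_mul_mod_self_left, Nat.mod_eq_of_lt h]

lemma divHelper (m q e : ℕ) (h : e < 2*m) : (2*m*q + e) / (2*m) = q := by
  rw [Nat.mul_add_div (by omega), Nat.div_eq_of_lt h]; omega

lemma mulStep (m x y : ℕ) (h : x < y) : 2*m*x + 2*m ≤ 2*m*y := by
  have h1 : 2*m*(x+1) ≤ 2*m*y := Nat.mul_le_mul_left _ (by omega)
  have h2 : 2*m*(x+1) = 2*m*x + 2*m := by ring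
  omega

def Dset (m r : ℕ) : Finset ℕ :=
  if r = 0 then ∅
  else if r < 2*m then
    (if r < m then {r - 1} else if r = m then {m-1, m} else {r})
  else if (r / (2*m)) % 2 = 1 then {r % (2*m)}
  else {(r % (2*m) + 1) % (2*m)}

lemma mem_Dset_iff (m r e : ℕ) (hm : 1 ≤ m) :
    e ∈ Dset m r ↔
      (1 ≤ r ∧ r < m ∧ e = r - 1) ∨
      (r = m ∧ (e = m - 1 ∨ e = m)) ∨
      (m < r ∧ r < 2*m ∧ e = r) ∨
      (2*m ≤ r ∧ (r/(2*m)) % 2 = 1 ∧ e = r % (2*m)) ∨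
      (2*m ≤ r ∧ (r/(2*m)) % 2 = 0 ∧ e = (r % (2*m) + 1) % (2*m)) := by
  unfold Dset
  split_ifs with h1 h2 h3 h4 h5 <;> simp [Finset.mem_insert] <;> omega

/-- The `q`-th row containing a cell of `J` with symbol `≡ t (mod 2m)`. -/
def symRow (m t q : ℕ) : ℕ :=
  if q = 0 then
    (if t = 0 then m else if t % 2 = 1 then (if t = 2*m-1 then m else (t+1)/2) else m + t/2)
  else if t % 2 = 0 then
    2*m*(2*((q+1)/2) - 1) + (t/2 + (if q % 2 = 0 then m else 0))
  else
    2*m*(2*((q+1)/2)) + ((t-1)/2 + (if q % 2 = 0 then m else 0))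

lemma symRow_zero_lt (m t : ℕ) (hm : 2 ≤ m) (ht : t < 2*m) : symRow m t 0 < 2*m := by
  rw [symRow, if_pos rfl]; split_ifs <;> omega

lemma symRow_facts (k τ m t q : ℕ) (hm : 2 ≤ m) (hτ : k = 2*τ+1) (ht : t < 2*m)
    (hq1 : 1 ≤ q) (hqk : q < k) :
    2*m ≤ symRow m t q ∧ symRow m t q < 2*m*k ∧
    (symRow m t q) / (2*m) = (if t % 2 = 0 then 2*((q+1)/2) - 1 else 2*((q+1)/2)) ∧
    (symRow m t q) % (2*m) =
      ((if t % 2 = 0 then t/2 else (t-1)/2) + (if q % 2 = 0 then m else 0)) := by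
  have hO : ((if t % 2 = 0 then t/2 else (t-1)/2) + (if q % 2 = 0 then m else 0)) < 2*m := by
    split_ifs <;> omega
  have hB1 : 1 ≤ (if t % 2 = 0 then 2*((q+1)/2) - 1 else 2*((q+1)/2)) := by
    split_ifs <;> omega
  have hBk : (if t % 2 = 0 then 2*((q+1)/2) - 1 else 2*((q+1)/2)) < k := by
    split_ifs <;> omega
  have hv : symRow m t q = 2*m*(if t % 2 = 0 then 2*((q+1)/2) - 1 else 2*((q+1)/2)) +
      ((if t % 2 = 0 then t/2 else (t-1)/2) + (if q % 2 = 0 then m else 0)) := by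
    rw [symRow, if_neg (show ¬ q = 0 by omega)]
    split_ifs <;> rfl
  have hdiv := divHelper m (if t % 2 = 0 then 2*((q+1)/2) - 1 else 2*((q+1)/2))
    ((if t % 2 = 0 then t/2 else (t-1)/2) + (if q % 2 = 0 then m else 0)) hO
  have hmod := modHelper m (if t % 2 = 0 then 2*((q+1)/2) - 1 else 2*((q+1)/2))
    ((if t % 2 = 0 then t/2 else (t-1)/2) + (if q % 2 = 0 then m else 0)) hO
  have h01 : 2*m*1 = 2*m := by ring
  have h02 : 2*m*1 ≤ 2*m*(if t % 2 = 0 then 2*((q+1)/2) - 1 else 2*((q+1)/2)) :=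
    Nat.mul_le_mul_left _ hB1
  have hms := mulStep m _ k hBk
  rw [hv]
  exact ⟨by omega, by omega, hdiv, hmod⟩

lemma symRow_mem (k τ m s q : ℕ) (hm : 2 ≤ m) (hτ : k = 2*τ+1) (hs : s < 2*m*k)
    (hq : q < k) :
    (2*m*k + s - symRow m (s % (2*m)) q) % (2*m) ∈ Dset m (symRow m (s % (2*m)) q) := by
  have hm0 : 0 < 2*m := by omega
  have hsd := Nat.div_add_mod s (2*m)
  have ht : s % (2*m) < 2*m := Nat.mod_lt _ hm0
  have hkm : k*(2*m) = 2*m*k := by ring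
  have hsk : s/(2*m) < k := (Nat.div_lt_iff_lt_mul hm0).2 (by omega)
  have hnn1 := Nat.zero_le (s/(2*m))
  have l2 : 2*m*(k + s/(2*m)) = 2*m*k + 2*m*(s/(2*m)) := by ring
  by_cases hq0 : q = 0
  · subst hq0
    have hvlt : symRow m (s % (2*m)) 0 < 2*m := symRow_zero_lt m _ hm ht
    have hveq : symRow m (s % (2*m)) 0 = if s % (2*m) = 0 then m else
        if s % (2*m) % 2 = 1 then (if s % (2*m) = 2*m-1 then m else (s % (2*m)+1)/2)
        else m + s % (2*m)/2 := by
      rw [symRow, if_pos rfl]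
    have hA : (k + s/(2*m) - 1) + 1 = k + s/(2*m) := by omega
    have l1 : 2*m*((k + s/(2*m) - 1)+1) = 2*m*(k + s/(2*m) - 1) + 2*m := by ring
    rw [hA] at l1
    by_cases ht0 : s % (2*m) = 0
    · have hvm : symRow m (s % (2*m)) 0 = m := by rw [hveq, if_pos ht0]
      have hX : 2*m*k + s - symRow m (s % (2*m)) 0 = 2*m*(k + s/(2*m) - 1) + m := by omega
      have hXm : (2*m*k + s - symRow m (s % (2*m)) 0) % (2*m) = m := by
        rw [hX]; exact modHelper _ _ _ (by omega)
      rw [mem_Dset_iff _ _ _ (by omega)]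
      omega
    · by_cases ht1 : s % (2*m) % 2 = 1
      · by_cases ht3 : s % (2*m) = 2*m-1
        · have hvm : symRow m (s % (2*m)) 0 = m := by
            rw [hveq, if_neg ht0, if_pos ht1, if_pos ht3]
          have hX : 2*m*k + s - symRow m (s % (2*m)) 0 = 2*m*(k + s/(2*m)) + (m-1) := by omega
          have hXm : (2*m*k + s - symRow m (s % (2*m)) 0) % (2*m) = m-1 := by
            rw [hX]; exact modHelper _ _ _ (by omega)
          rw [mem_Dset_iff _ _ _ (by omega)]
          omega
        · have hvm : symRow m (s % (2*m)) 0 = (s % (2*m)+1)/2 := by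
            rw [hveq, if_neg ht0, if_pos ht1, if_neg ht3]
          have hX : 2*m*k + s - symRow m (s % (2*m)) 0
              = 2*m*(k + s/(2*m)) + ((s % (2*m)-1)/2) := by omega
          have hXm : (2*m*k + s - symRow m (s % (2*m)) 0) % (2*m) = (s % (2*m)-1)/2 := by
            rw [hX]; exact modHelper _ _ _ (by omega)
          rw [mem_Dset_iff _ _ _ (by omega)]
          omega
      · have hvm : symRow m (s % (2*m)) 0 = m + s % (2*m)/2 := by
          rw [hveq, if_neg ht0, if_neg ht1]
        have hX : 2*m*k + s - symRow m (s % (2*m)) 0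
            = 2*m*(k + s/(2*m) - 1) + (m + s % (2*m)/2) := by omega
        have hXm : (2*m*k + s - symRow m (s % (2*m)) 0) % (2*m) = m + s % (2*m)/2 := by
          rw [hX]; exact modHelper _ _ _ (by omega)
        rw [mem_Dset_iff _ _ _ (by omega)]
        omega
  · have hq1 : 1 ≤ q := by omega
    obtain ⟨hge, hlt, hdiv, hmod⟩ := symRow_facts k τ m (s % (2*m)) q hm hτ ht hq1 hq
    have hveq := Nat.div_add_mod (symRow m (s % (2*m)) q) (2*m)
    rw [hdiv, hmod] at hveq
    rw [mem_Dset_iff _ _ _ (by omega), hdiv, hmod]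
    generalize hBdef : (if s % (2*m) % 2 = 0 then 2*((q+1)/2) - 1 else 2*((q+1)/2)) = B
      at hveq ⊢
    generalize hOdef : ((if s % (2*m) % 2 = 0 then s % (2*m)/2 else (s % (2*m)-1)/2) +
      (if q % 2 = 0 then m else 0)) = O at hveq ⊢
    have hB1 : 1 ≤ B := by rw [← hBdef]; split_ifs <;> omega
    have hBk : B < k := by rw [← hBdef]; split_ifs <;> omega
    have hOlt : O < 2*m := by rw [← hOdef]; split_ifs <;> omega
    have hA1 : (k + s/(2*m) - B) + B = k + s/(2*m) := by omega
    have l1 : 2*m*((k + s/(2*m) - B)+B) = 2*m*(k + s/(2*m) - B) + 2*m*B := by ring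
    rw [hA1] at l1
    have hA2 : (k + s/(2*m) - B - 1) + B + 1 = k + s/(2*m) := by omega
    have l3 : 2*m*((k + s/(2*m) - B - 1)+B+1) = 2*m*(k + s/(2*m) - B - 1) + 2*m*B + 2*m := by
      ring
    rw [hA2] at l3
    by_cases ht2 : s % (2*m) % 2 = 0
    · have hBodd : B % 2 = 1 := by rw [← hBdef, if_pos ht2]; omega
      by_cases hq2 : q % 2 = 0
      · have hOv : O = s % (2*m)/2 + m := by rw [← hOdef, if_pos ht2, if_pos hq2]
        have hX : 2*m*k + s - symRow m (s % (2*m)) q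
            = 2*m*(k + s/(2*m) - B - 1) + (m + s % (2*m)/2) := by omega
        have hXm : (2*m*k + s - symRow m (s % (2*m)) q) % (2*m) = m + s % (2*m)/2 := by
          rw [hX]; exact modHelper _ _ _ (by omega)
        omega
      · have hOv : O = s % (2*m)/2 + 0 := by rw [← hOdef, if_pos ht2, if_neg hq2]
        have hX : 2*m*k + s - symRow m (s % (2*m)) q
            = 2*m*(k + s/(2*m) - B) + (s % (2*m)/2) := by omega
        have hXm : (2*m*k + s - symRow m (s % (2*m)) q) % (2*m) = s % (2*m)/2 := by
          rw [hX]; exact modHelper _ _ _ (by omega)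
        omega
    · have ht1 : s % (2*m) % 2 = 1 := by omega
      have hBev : B % 2 = 0 := by rw [← hBdef, if_neg ht2]; omega
      by_cases hq2 : q % 2 = 0
      · have hOv : O = (s % (2*m)-1)/2 + m := by rw [← hOdef, if_neg ht2, if_pos hq2]
        by_cases ht3 : s % (2*m) = 2*m-1
        · have hX : 2*m*k + s - symRow m (s % (2*m)) q = 2*m*(k + s/(2*m) - B) + 0 := by omega
          have hXm : (2*m*k + s - symRow m (s % (2*m)) q) % (2*m) = 0 := by
            rw [hX]; exact modHelper _ _ _ (by omega)
          have hOm : (O + 1) % (2*m) = 0 := by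
            rw [show O + 1 = 2*m by omega]; exact Nat.mod_self _
          omega
        · have hX : 2*m*k + s - symRow m (s % (2*m)) q
              = 2*m*(k + s/(2*m) - B - 1) + (m + (s % (2*m)+1)/2) := by omega
          have hXm : (2*m*k + s - symRow m (s % (2*m)) q) % (2*m) = m + (s % (2*m)+1)/2 := by
            rw [hX]; exact modHelper _ _ _ (by omega)
          have hOm : (O + 1) % (2*m) = m + (s % (2*m)+1)/2 := by
            rw [show O + 1 = m + (s % (2*m)+1)/2 by omega]; exact Nat.mod_eq_of_lt (by omega)
          omega
      · have hOv : O = (s % (2*m)-1)/2 + 0 := by rw [← hOdef, if_neg ht2, if_neg hq2]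
        have hX : 2*m*k + s - symRow m (s % (2*m)) q
            = 2*m*(k + s/(2*m) - B) + ((s % (2*m)+1)/2) := by omega
        have hXm : (2*m*k + s - symRow m (s % (2*m)) q) % (2*m) = (s % (2*m)+1)/2 := by
          rw [hX]; exact modHelper _ _ _ (by omega)
        have hOm : (O + 1) % (2*m) = (s % (2*m)+1)/2 := by
          rw [show O + 1 = (s % (2*m)+1)/2 by omega]; exact Nat.mod_eq_of_lt (by omega)
        omega

lemma symRow_inj (k τ m t : ℕ) (hm : 2 ≤ m) (hτ : k = 2*τ+1) (ht : t < 2*m) :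
    ∀ q1, q1 < k → ∀ q2, q2 < k → symRow m t q1 = symRow m t q2 → q1 = q2 := by
  intro q1 h1 q2 h2 heq
  by_cases hz1 : q1 = 0 <;> by_cases hz2 : q2 = 0
  · omega
  · exfalso
    obtain ⟨hge, -, -, -⟩ := symRow_facts k τ m t q2 hm hτ ht (by omega) h2
    have := symRow_zero_lt m t hm ht
    rw [hz1] at heq; omega
  · exfalso
    obtain ⟨hge, -, -, -⟩ := symRow_facts k τ m t q1 hm hτ ht (by omega) h1
    have := symRow_zero_lt m t hm ht
    rw [hz2] at heq; omega
  · obtain ⟨-, -, hd1, hm1⟩ := symRow_facts k τ m t q1 hm hτ ht (by omega) h1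
    obtain ⟨-, -, hd2, hm2⟩ := symRow_facts k τ m t q2 hm hτ ht (by omega) h2
    have hBeq : (if t % 2 = 0 then 2*((q1+1)/2) - 1 else 2*((q1+1)/2)) =
        (if t % 2 = 0 then 2*((q2+1)/2) - 1 else 2*((q2+1)/2)) := by
      rw [← hd1, ← hd2, heq]
    have hOeq : ((if t % 2 = 0 then t/2 else (t-1)/2) + (if q1 % 2 = 0 then m else 0)) =
        ((if t % 2 = 0 then t/2 else (t-1)/2) + (if q2 % 2 = 0 then m else 0)) := by
      rw [← hm1, ← hm2, heq]
    split_ifs at hBeq hOeq <;> omega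

lemma symRow_surj (k τ m s r : ℕ) (hm : 2 ≤ m) (hτ : k = 2*τ+1) (hs : s < 2*m*k)
    (hr : r < 2*m*k) (h : (2*m*k + s - r) % (2*m) ∈ Dset m r) :
    ∃ q, q < k ∧ symRow m (s % (2*m)) q = r := by
  have hm0 : 0 < 2*m := by omega
  have hsd := Nat.div_add_mod s (2*m)
  have hdmr := Nat.div_add_mod r (2*m)
  have ht : s % (2*m) < 2*m := Nat.mod_lt _ hm0
  have hi : r % (2*m) < 2*m := Nat.mod_lt _ hm0
  have hkm : k*(2*m) = 2*m*k := by ring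
  have hsk : s/(2*m) < k := (Nat.div_lt_iff_lt_mul hm0).2 (by omega)
  have hbk : r/(2*m) < k := (Nat.div_lt_iff_lt_mul hm0).2 (by omega)
  have hnn1 := Nat.zero_le (s/(2*m))
  have hnn2 := Nat.zero_le (r/(2*m))
  have l2 : 2*m*(k + s/(2*m)) = 2*m*k + 2*m*(s/(2*m)) := by ring
  have hA1 : (k + s/(2*m) - r/(2*m)) + r/(2*m) = k + s/(2*m) := by omega
  have l1 : 2*m*((k + s/(2*m) - r/(2*m)) + r/(2*m))
      = 2*m*(k + s/(2*m) - r/(2*m)) + 2*m*(r/(2*m)) := by ring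
  rw [hA1] at l1
  have hA2 : (k + s/(2*m) - r/(2*m) - 1) + r/(2*m) + 1 = k + s/(2*m) := by omega
  have l3 : 2*m*((k + s/(2*m) - r/(2*m) - 1) + r/(2*m) + 1)
      = 2*m*(k + s/(2*m) - r/(2*m) - 1) + 2*m*(r/(2*m)) + 2*m := by ring
  rw [hA2] at l3
  have hE : (r % (2*m) ≤ s % (2*m) ∧
        (2*m*k + s - r) % (2*m) = s % (2*m) - r % (2*m)) ∨
      (s % (2*m) < r % (2*m) ∧
        (2*m*k + s - r) % (2*m) = 2*m + s % (2*m) - r % (2*m)) := by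
    rcases le_or_gt (r % (2*m)) (s % (2*m)) with hit | hit
    · refine Or.inl ⟨hit, ?_⟩
      rw [show 2*m*k + s - r = 2*m*(k + s/(2*m) - r/(2*m)) + (s % (2*m) - r % (2*m)) by omega]
      exact modHelper _ _ _ (by omega)
    · refine Or.inr ⟨hit, ?_⟩
      rw [show 2*m*k + s - r
        = 2*m*(k + s/(2*m) - r/(2*m) - 1) + (2*m + s % (2*m) - r % (2*m)) by omega]
      exact modHelper _ _ _ (by omega)
  rw [mem_Dset_iff _ _ _ (by omega)] at h
  have hzero : 2*m*0 = 0 := by ring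
  rcases h with ⟨h1,h2,h3⟩ | ⟨h1,h2⟩ | ⟨h1,h2,h3⟩ | ⟨h1,h2,h3⟩ | ⟨h1,h2,h3⟩
  · -- 1 ≤ r < m
    have hb0 : r/(2*m) = 0 := Nat.div_eq_of_lt (by omega)
    rw [hb0] at hdmr
    rcases hE with ⟨hit, hXm⟩ | ⟨hit, hXm⟩
    · refine ⟨0, by omega, ?_⟩
      rw [symRow, if_pos rfl]
      split_ifs <;> omega
    · exfalso; omega
  · -- r = m
    have hb0 : r/(2*m) = 0 := Nat.div_eq_of_lt (by omega)
    rw [hb0] at hdmr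
    rcases hE with ⟨hit, hXm⟩ | ⟨hit, hXm⟩ <;>
    · refine ⟨0, by omega, ?_⟩
      rw [symRow, if_pos rfl]
      split_ifs <;> omega
  · -- m < r < 2m
    have hb0 : r/(2*m) = 0 := Nat.div_eq_of_lt (by omega)
    rw [hb0] at hdmr
    rcases hE with ⟨hit, hXm⟩ | ⟨hit, hXm⟩
    · exfalso; omega
    · refine ⟨0, by omega, ?_⟩
      rw [symRow, if_pos rfl]
      split_ifs <;> omega
  · -- odd block, e = i
    have hb1 : 1 ≤ r/(2*m) := (Nat.one_le_div_iff hm0).2 h1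
    rcases hE with ⟨hit, hXm⟩ | ⟨hit, hXm⟩
    · have ht2 : s % (2*m) % 2 = 0 := by omega
      refine ⟨r/(2*m), by omega, ?_⟩
      rw [symRow, if_neg (show ¬ r/(2*m) = 0 by omega), if_pos ht2]
      have link : 2*m*(2*((r/(2*m)+1)/2) - 1) = 2*m*(r/(2*m)) := by
        rw [show 2*((r/(2*m)+1)/2) - 1 = r/(2*m) by omega]
      split_ifs <;> omega
    · have ht2 : s % (2*m) % 2 = 0 := by omega
      refine ⟨r/(2*m)+1, by omega, ?_⟩
      rw [symRow, if_neg (show ¬ r/(2*m)+1 = 0 by omega), if_pos ht2]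
      have link : 2*m*(2*((r/(2*m)+1+1)/2) - 1) = 2*m*(r/(2*m)) := by
        rw [show 2*((r/(2*m)+1+1)/2) - 1 = r/(2*m) by omega]
      split_ifs <;> omega
  · -- even block, e = (i+1) % 2m
    have hb1 : 1 ≤ r/(2*m) := (Nat.one_le_div_iff hm0).2 h1
    have hb2 : 2 ≤ r/(2*m) := by omega
    by_cases hi1 : r % (2*m) = 2*m-1
    · have hmm : (r % (2*m)+1) % (2*m) = 0 := by
        rw [show r % (2*m)+1 = 2*m by omega]; exact Nat.mod_self _
      rcases hE with ⟨hit, hXm⟩ | ⟨hit, hXm⟩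
      · have ht1' : ¬ s % (2*m) % 2 = 0 := by omega
        refine ⟨r/(2*m), by omega, ?_⟩
        rw [symRow, if_neg (show ¬ r/(2*m) = 0 by omega), if_neg ht1']
        have link : 2*m*(2*((r/(2*m)+1)/2)) = 2*m*(r/(2*m)) := by
          rw [show 2*((r/(2*m)+1)/2) = r/(2*m) by omega]
        split_ifs <;> omega
      · exfalso; omega
    · have hmm : (r % (2*m)+1) % (2*m) = r % (2*m)+1 := Nat.mod_eq_of_lt (by omega)
      rcases hE with ⟨hit, hXm⟩ | ⟨hit, hXm⟩
      · have ht1' : ¬ s % (2*m) % 2 = 0 := by omega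
        refine ⟨r/(2*m)-1, by omega, ?_⟩
        rw [symRow, if_neg (show ¬ r/(2*m)-1 = 0 by omega), if_neg ht1']
        have link : 2*m*(2*((r/(2*m)-1+1)/2)) = 2*m*(r/(2*m)) := by
          rw [show 2*((r/(2*m)-1+1)/2) = r/(2*m) by omega]
        split_ifs <;> omega
      · have ht1' : ¬ s % (2*m) % 2 = 0 := by omega
        refine ⟨r/(2*m), by omega, ?_⟩
        rw [symRow, if_neg (show ¬ r/(2*m) = 0 by omega), if_neg ht1']
        have link : 2*m*(2*((r/(2*m)+1)/2)) = 2*m*(r/(2*m)) := by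
          rw [show 2*((r/(2*m)+1)/2) = r/(2*m) by omega]
        split_ifs <;> omega


lemma inJ_iff (k m n : ℕ) (hk : Odd k) (hm : 2 ≤ m) (hn : n = 2 * k * m)
    (p : Fin n × Fin n) :
    InJ k m n p ↔ (p.2 : ℕ) % (2*m) ∈ Dset m (p.1 : ℕ) := by
  obtain ⟨τ, hτ⟩ := hk
  have hn' : n = 2*m*k := by rw [hn]; ring
  have hm0 : 0 < 2*m := by omega
  have hr : (p.1 : ℕ) < n := p.1.isLt
  have hc : (p.2 : ℕ) < n := p.2.isLt
  have hkm : k*(2*m) = 2*m*k := by ring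
  simp only [InJ]
  generalize hR : (p.1 : ℕ) = r at hr ⊢
  generalize hC : (p.2 : ℕ) = c at hc ⊢
  constructor
  · intro h
    rcases h with ⟨i, j, hi1, hi2, hj, hri, hci⟩ | ⟨i, j, hi1, hi2, hj, hri, hci⟩ |
      ⟨i, j, l, hi2, hj, hl1, hl2, hri, hci⟩ | ⟨i, j, l, hi2, hj, hl1, hl2, hri, hci⟩
    · -- J₀
      have e0 : 2*j*m = 2*m*j := by ring
      have hms := mulStep m j k hj
      have e1 : 2*j*m + i - 1 = 2*m*j + (i-1) := by omega
      have e2 : 2*m*j + (i-1) < n := by omega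
      rw [e1, Nat.mod_eq_of_lt e2] at hci
      have e3 : c % (2*m) = i - 1 := by rw [hci]; exact modHelper m j (i-1) (by omega)
      rw [mem_Dset_iff _ _ _ (by omega)]
      omega
    · -- J₁
      have e0 : 2*j*m = 2*m*j := by ring
      have hms := mulStep m j k hj
      have e1 : 2*j*m + i = 2*m*j + i := by omega
      have e2 : 2*m*j + i < n := by omega
      rw [e1, Nat.mod_eq_of_lt e2] at hci
      have e3 : c % (2*m) = i := by rw [hci]; exact modHelper m j i (by omega)
      rw [mem_Dset_iff _ _ _ (by omega)]
      omega
    · -- J₂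
      have e0 : 2*m*(2*l-1) + 2*m ≤ 2*m*k := mulStep m (2*l-1) k (by omega)
      have e00 : 2*m*1 = 2*m := by ring
      have e01 : 2*m*1 ≤ 2*m*(2*l-1) := Nat.mul_le_mul_left _ (by omega)
      have er1 : 2*m*(2*l-1) + i < n := by omega
      rw [Nat.mod_eq_of_lt er1] at hri
      have er2 : r / (2*m) = 2*l-1 := by rw [hri]; exact divHelper m _ i (by omega)
      have er3 : r % (2*m) = i := by rw [hri]; exact modHelper m _ i (by omega)
      have e0' : 2*j*m = 2*m*j := by ring
      have hms := mulStep m j k hj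
      have e1 : 2*j*m + i = 2*m*j + i := by omega
      have e2 : 2*m*j + i < n := by omega
      rw [e1, Nat.mod_eq_of_lt e2] at hci
      have e3 : c % (2*m) = i := by rw [hci]; exact modHelper m j i (by omega)
      rw [mem_Dset_iff _ _ _ (by omega)]
      omega
    · -- J₃
      have e4 : 4*m*l = 2*m*(2*l) := by ring
      have e0 : 2*m*(2*l) + 2*m ≤ 2*m*k := mulStep m (2*l) k (by omega)
      have e00 : 2*m*1 = 2*m := by ring
      have e01 : 2*m*1 ≤ 2*m*(2*l) := Nat.mul_le_mul_left _ (by omega)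
      have er1 : 4*m*l + i < n := by omega
      rw [Nat.mod_eq_of_lt er1, e4] at hri
      have er2 : r / (2*m) = 2*l := by rw [hri]; exact divHelper m _ i (by omega)
      have er3 : r % (2*m) = i := by rw [hri]; exact modHelper m _ i (by omega)
      have e0' : 2*j*m = 2*m*j := by ring
      have hms := mulStep m j k hj
      rcases lt_or_ge (i+1) (2*m) with hilt | hile
      · have e1 : 2*j*m + i + 1 = 2*m*j + (i+1) := by omega
        have e2 : 2*m*j + (i+1) < n := by omega
        rw [e1, Nat.mod_eq_of_lt e2] at hci
        have e3 : c % (2*m) = i+1 := by rw [hci]; exact modHelper m j (i+1) hilt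
        rw [mem_Dset_iff _ _ _ (by omega), er3]
        have e5 : (i+1) % (2*m) = i+1 := Nat.mod_eq_of_lt hilt
        omega
      · have hieq : i + 1 = 2*m := by omega
        have hcm : c % (2*m) = 0 := by
          rcases Nat.lt_or_ge (j+1) k with hjk | hjk
          · have hms2 := mulStep m (j+1) k hjk
            have e6 : 2*m*(j+1) = 2*m*j + 2*m := by ring
            have e1 : 2*j*m + i + 1 = 2*m*(j+1) + 0 := by omega
            have e2 : 2*m*(j+1) + 0 < n := by omega
            rw [e1, Nat.mod_eq_of_lt e2] at hci
            rw [hci]; exact modHelper m (j+1) 0 (by omega)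
          · have hjk1 : j + 1 = k := by omega
            have e6 : 2*m*(j+1) = 2*m*j + 2*m := by ring
            have e7 : 2*m*(j+1) = 2*m*k := by rw [hjk1]
            have e1 : 2*j*m + i + 1 = n := by omega
            rw [e1, Nat.mod_self] at hci
            rw [hci]; exact Nat.zero_mod _
        rw [mem_Dset_iff _ _ _ (by omega), er3]
        have e5 : (i+1) % (2*m) = 0 := by rw [hieq]; exact Nat.mod_self _
        omega
  · intro h
    rw [mem_Dset_iff _ _ _ (by omega)] at h
    have hdm := Nat.div_add_mod c (2*m)
    have hdmr := Nat.div_add_mod r (2*m)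
    have he : c % (2*m) < 2*m := Nat.mod_lt _ hm0
    have her : r % (2*m) < 2*m := Nat.mod_lt _ hm0
    have hjk : c / (2*m) < k := (Nat.div_lt_iff_lt_mul hm0).2 (by omega)
    have hbk : r / (2*m) < k := (Nat.div_lt_iff_lt_mul hm0).2 (by omega)
    have hms := mulStep m (c/(2*m)) k hjk
    have e0 : 2*(c/(2*m))*m = 2*m*(c/(2*m)) := by ring
    rcases h with ⟨h1, h2, h3⟩ | ⟨h1, h2⟩ | ⟨h1, h2, h3⟩ | ⟨h1, h2, h3⟩ | ⟨h1, h2, h3⟩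
    · left
      refine ⟨r, c/(2*m), by omega, by omega, hjk, rfl, ?_⟩
      have e1 : 2*(c/(2*m))*m + r - 1 = c := by omega
      rw [e1, Nat.mod_eq_of_lt hc]
    · rcases h2 with h2 | h2
      · left
        refine ⟨m, c/(2*m), by omega, le_refl m, hjk, h1, ?_⟩
        have e1 : 2*(c/(2*m))*m + m - 1 = c := by omega
        rw [e1, Nat.mod_eq_of_lt hc]
      · right; left
        refine ⟨m, c/(2*m), le_refl m, by omega, hjk, h1, ?_⟩
        have e1 : 2*(c/(2*m))*m + m = c := by omega
        rw [e1, Nat.mod_eq_of_lt hc]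
    · right; left
      refine ⟨r, c/(2*m), by omega, by omega, hjk, rfl, ?_⟩
      have e1 : 2*(c/(2*m))*m + r = c := by omega
      rw [e1, Nat.mod_eq_of_lt hc]
    · have hb1 : 1 ≤ r/(2*m) := (Nat.one_le_div_iff hm0).2 h1
      right; right; left
      refine ⟨r % (2*m), c/(2*m), (r/(2*m)+1)/2, by omega, hjk, by omega, by omega, ?_, ?_⟩
      · have h2l : 2*((r/(2*m)+1)/2) - 1 = r/(2*m) := by omega
        rw [h2l, Nat.div_add_mod, Nat.mod_eq_of_lt hr]
      · have e1 : 2*(c/(2*m))*m + r%(2*m) = c := by omega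
        rw [e1, Nat.mod_eq_of_lt hc]
    · have hb1 : 1 ≤ r/(2*m) := (Nat.one_le_div_iff hm0).2 h1
      right; right; right
      have h2l : 2*((r/(2*m))/2) = r/(2*m) := by omega
      have e4 : 4*m*((r/(2*m))/2) = 2*m*(2*((r/(2*m))/2)) := by ring
      rcases lt_or_ge (r%(2*m)+1) (2*m) with hi | hi
      · have e5 : (r%(2*m)+1) % (2*m) = r%(2*m)+1 := Nat.mod_eq_of_lt hi
        refine ⟨r%(2*m), c/(2*m), (r/(2*m))/2, by omega, hjk, by omega, by omega, ?_, ?_⟩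
        · rw [e4, h2l, Nat.div_add_mod, Nat.mod_eq_of_lt hr]
        · have e1 : 2*(c/(2*m))*m + r%(2*m) + 1 = c := by omega
          rw [e1, Nat.mod_eq_of_lt hc]
      · have hieq : r%(2*m) + 1 = 2*m := by omega
        have e5 : (r%(2*m)+1) % (2*m) = 0 := by rw [hieq]; exact Nat.mod_self _
        rcases Nat.eq_zero_or_pos (c/(2*m)) with hj0 | hj0
        · have hc0 : c = 0 := by
            have h5 := hdm; rw [hj0] at h5
            have h6 : 2*m*0 = 0 := by ring
            omega
          refine ⟨r%(2*m), k-1, (r/(2*m))/2, by omega, by omega, by omega, by omega, ?_, ?_⟩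
          · rw [e4, h2l, Nat.div_add_mod, Nat.mod_eq_of_lt hr]
          · have e6 : 2*(k-1)*m = 2*m*(k-1) := by ring
            have e8 : 2*m*(k-1+1) = 2*m*(k-1) + 2*m := by ring
            have e9 : k - 1 + 1 = k := by omega
            rw [e9] at e8
            have e10 : 2*(k-1)*m + r%(2*m) + 1 = n := by omega
            rw [e10, Nat.mod_self]
            exact hc0
        · refine ⟨r%(2*m), c/(2*m) - 1, (r/(2*m))/2, by omega, by omega, by omega, by omega, ?_, ?_⟩
          · rw [e4, h2l, Nat.div_add_mod, Nat.mod_eq_of_lt hr]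
          · have e6 : 2*(c/(2*m)-1)*m = 2*m*(c/(2*m)-1) := by ring
            have e7 : 2*m*(c/(2*m)-1+1) = 2*m*(c/(2*m)-1) + 2*m := by ring
            have e8 : c/(2*m)-1+1 = c/(2*m) := by omega
            rw [e8] at e7
            have hcm0 : c % (2*m) = 0 := by omega
            have e10 : 2*(c/(2*m)-1)*m + r%(2*m) + 1 = c := by omega
            rw [e10, Nat.mod_eq_of_lt hc]


/-- colRow -/
def colRow (m e b : ℕ) : ℕ :=
  if b = 0 then (if e < m then e+1 else if e = m then m else e)
  else 2*m*b + (if b % 2 = 1 then e else (if e = 0 then 2*m-1 else e - 1))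

lemma colRow_spec (k m e : ℕ) (hm : 2 ≤ m) (hk : 1 ≤ k) (he : e < 2*m) :
    ∀ b < k, colRow m e b < 2*m*k ∧ (colRow m e b)/(2*m) = b ∧ e ∈ Dset m (colRow m e b) := by
  intro b hb
  have hstep0 : 2*m*0 + 2*m ≤ 2*m*k := mulStep m 0 k hk
  have h00 : 2*m*0 = 0 := by ring
  by_cases hb0 : b = 0
  · subst hb0
    have hv : colRow m e 0 = if e < m then e+1 else if e = m then m else e := by
      simp [colRow]
    have hvlt : colRow m e 0 < 2*m := by rw [hv]; split_ifs <;> omega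
    refine ⟨by omega, Nat.div_eq_of_lt hvlt, ?_⟩
    rw [mem_Dset_iff _ _ _ (by omega), hv]
    split_ifs <;> omega
  · have hbpos : 1 ≤ b := by omega
    have hms := mulStep m b k hb
    set o := if b % 2 = 1 then e else (if e = 0 then 2*m-1 else e - 1) with ho
    have holt : o < 2*m := by rw [ho]; split_ifs <;> omega
    have hv : colRow m e b = 2*m*b + o := by simp [colRow, hb0]; rfl
    have h01 : 2*m*1 = 2*m := by ring
    have h02 : 2*m*1 ≤ 2*m*b := Nat.mul_le_mul_left _ hbpos
    have hdiv : (colRow m e b)/(2*m) = b := by rw [hv]; exact divHelper m b o holt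
    have hmod : (colRow m e b)%(2*m) = o := by rw [hv]; exact modHelper m b o holt
    refine ⟨by omega, hdiv, ?_⟩
    rw [mem_Dset_iff _ _ _ (by omega), hdiv, hmod]
    by_cases hpar : b % 2 = 1
    · have ho1 : o = e := by rw [ho, if_pos hpar]
      omega
    · have ho2 : o = if e = 0 then 2*m-1 else e-1 := by rw [ho, if_neg hpar]
      by_cases he0 : e = 0
      · have ho3 : o = 2*m-1 := by rw [ho2, if_pos he0]
        have hmm : (o + 1) % (2*m) = 0 := by
          rw [ho3, show 2*m-1+1 = 2*m by omega]; exact Nat.mod_self _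
        omega
      · have ho3 : o = e-1 := by rw [ho2, if_neg he0]
        have hmm : (o + 1) % (2*m) = e := by
          rw [ho3, show e-1+1 = e by omega]; exact Nat.mod_eq_of_lt he
        omega

lemma colRow_surj (k m e r : ℕ) (hm : 2 ≤ m) (he : e < 2*m) (hr : r < 2*m*k)
    (hmem : e ∈ Dset m r) : ∃ b < k, colRow m e b = r := by
  have hm0 : 0 < 2*m := by omega
  have hkm : k*(2*m) = 2*m*k := by ring
  have hbk : r/(2*m) < k := (Nat.div_lt_iff_lt_mul hm0).2 (by omega)
  have hdmr := Nat.div_add_mod r (2*m)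
  have her : r % (2*m) < 2*m := Nat.mod_lt _ hm0
  have hk1 : 1 ≤ k := by
    rcases Nat.eq_zero_or_pos k with h0 | h0
    · rw [h0, Nat.mul_zero] at hr; omega
    · omega
  rw [mem_Dset_iff _ _ _ (by omega)] at hmem
  have hzero : 2*m*0 = 0 := by ring
  rcases hmem with ⟨h1,h2,h3⟩ | ⟨h1,h2⟩ | ⟨h1,h2,h3⟩ | ⟨h1,h2,h3⟩ | ⟨h1,h2,h3⟩
  · exact ⟨0, hk1, by simp only [colRow, if_pos rfl]; split_ifs <;> omega⟩
  · exact ⟨0, hk1, by simp only [colRow, if_pos rfl]; split_ifs <;> omega⟩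
  · exact ⟨0, hk1, by simp only [colRow, if_pos rfl]; split_ifs <;> omega⟩
  · refine ⟨r/(2*m), hbk, ?_⟩
    have hb0 : ¬ (r/(2*m) = 0) := by
      intro h0; rw [h0] at hdmr; omega
    simp only [colRow, if_neg hb0, if_pos h2]
    omega
  · refine ⟨r/(2*m), hbk, ?_⟩
    have hb0 : ¬ (r/(2*m) = 0) := by
      intro h0; rw [h0] at hdmr; omega
    have hb2 : ¬ ((r/(2*m)) % 2 = 1) := by omega
    simp only [colRow, if_neg hb0, if_neg hb2]
    by_cases hx : r % (2*m) = 2*m-1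
    · have h5 : (r%(2*m)+1)%(2*m) = 0 := by
        rw [hx, show 2*m-1+1 = 2*m by omega]; exact Nat.mod_self _
      rw [if_pos (by omega : e = 0)]
      omega
    · have h5 : (r%(2*m)+1)%(2*m) = r%(2*m)+1 := Nat.mod_eq_of_lt (by omega)
      rw [if_neg (by omega : ¬ e = 0)]
      omega


lemma card_eq_of_enum {α : Type*} [DecidableEq α] (S : Finset α) (K : ℕ) (F : ℕ → α)
    (h1 : ∀ q < K, F q ∈ S) (h2 : ∀ a < K, ∀ b < K, F a = F b → a = b)
    (h3 : ∀ x ∈ S, ∃ q < K, F q = x) : S.card = K := by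
  have hS : S = (Finset.range K).image F := by
    ext x
    simp only [Finset.mem_image, Finset.mem_range]
    constructor
    · intro hx; obtain ⟨q, hq, he⟩ := h3 x hx; exact ⟨q, hq, he⟩
    · rintro ⟨q, hq, rfl⟩; exact h1 q hq
  rw [hS, Finset.card_image_of_injOn, Finset.card_range]
  intro a ha b hb hab
  exact h2 a (Finset.mem_range.1 ha) b (Finset.mem_range.1 hb) hab

lemma add_inv_mod (n r s : ℕ) (hr : r < n) (hs : s < n) : (r + (n + s - r) % n) % n = s := by
  rcases le_or_gt r s with h | h
  · rw [show n + s - r = n + (s - r) by omega, Nat.add_mod_left,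
      Nat.mod_eq_of_lt (show s - r < n by omega), show r + (s - r) = s by omega]
    exact Nat.mod_eq_of_lt hs
  · rw [Nat.mod_eq_of_lt (show n + s - r < n by omega),
      show r + (n + s - r) = n + s by omega, Nat.add_mod_left, Nat.mod_eq_of_lt hs]

lemma inv_mod_unique (n r c s : ℕ) (hr : r < n) (hc : c < n) (hs : s < n)
    (h : (r + c) % n = s) : c = (n + s - r) % n := by
  rcases lt_or_ge (r + c) n with h1 | h1
  · rw [Nat.mod_eq_of_lt h1] at h
    rw [show n + s - r = n + (s - r) by omega, Nat.add_mod_left, Nat.mod_eq_of_lt (by omega)]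
    omega
  · have h2 : (r + c) % n = r + c - n := by
      rw [Nat.mod_eq_sub_mod h1, Nat.mod_eq_of_lt (by omega)]
    rw [h2] at h
    rw [Nat.mod_eq_of_lt (show n + s - r < n by omega)]
    omega



theorem stmt9 (k m n : ℕ) (hk : Odd k) (hm : 2 ≤ m) (hn : n = 2 * k * m) :
    (∀ c : Fin n,
      ((Finset.univ.filter (InJ k m n)).filter fun p => p.2 = c).card = k) ∧
    (∀ s : Fin n,
      ((Finset.univ.filter (InJ k m n)).filter
        fun p => ((p.1 : ℕ) + (p.2 : ℕ)) % n = (s : ℕ)).card = k) ∧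
    (∀ i : Fin n, (i : ℕ) = 0 →
      ((Finset.univ.filter (InJ k m n)).filter fun p => p.1 = i).card = 0) ∧
    (∀ i : Fin n, (i : ℕ) = m →
      ((Finset.univ.filter (InJ k m n)).filter fun p => p.1 = i).card = 2 * k) ∧
    (∀ i : Fin n, (i : ℕ) ≠ 0 → (i : ℕ) ≠ m →
      ((Finset.univ.filter (InJ k m n)).filter fun p => p.1 = i).card = k) := by
  obtain ⟨τ, hτ⟩ := hk
  have hm0 : 0 < 2*m := by omega
  have hn' : n = 2*m*k := by rw [hn]; ring
  have h00 : 2*m*0 = 0 := by ring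
  have hstep := mulStep m 0 k (by omega)
  have hn0 : 0 < n := by omega
  have hk1 : 1 ≤ k := by omega
  have hkm2 : k*(2*m) = 2*m*k := by ring
  have hJ : ∀ p : Fin n × Fin n, InJ k m n p ↔ (p.2 : ℕ) % (2*m) ∈ Dset m (p.1 : ℕ) :=
    inJ_iff k m n ⟨τ, hτ⟩ hm hn
  have hdvd : 2*m ∣ n := ⟨k, hn'⟩
  refine ⟨?_, ?_, ?_, ?_, ?_⟩
  · -- columns
    intro c
    have he : (c:ℕ) % (2*m) < 2*m := Nat.mod_lt _ hm0
    have hspec := colRow_spec k m ((c:ℕ) % (2*m)) hm hk1 he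
    apply card_eq_of_enum _ k
      (fun b => (⟨colRow m ((c:ℕ) % (2*m)) b % n, Nat.mod_lt _ hn0⟩, c))
    · intro q hq
      obtain ⟨hlt, hdiv, hmem⟩ := hspec q hq
      have hltn : colRow m ((c:ℕ) % (2*m)) q < n := by omega
      simp only [Finset.mem_filter, Finset.mem_univ, true_and]
      constructor
      · rw [hJ]
        simpa [Nat.mod_eq_of_lt hltn] using hmem
      · trivial
    · intro a ha b hb h
      obtain ⟨hlta, hdiva, -⟩ := hspec a ha
      obtain ⟨hltb, hdivb, -⟩ := hspec b hb
      have h' : colRow m ((c:ℕ) % (2*m)) a % n = colRow m ((c:ℕ) % (2*m)) b % n :=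
        congrArg (fun p : Fin n × Fin n => (p.1 : ℕ)) h
      rw [Nat.mod_eq_of_lt (show colRow m ((c:ℕ) % (2*m)) a < n by omega),
        Nat.mod_eq_of_lt (show colRow m ((c:ℕ) % (2*m)) b < n by omega)] at h'
      have hdd : colRow m ((c:ℕ) % (2*m)) a / (2*m) = colRow m ((c:ℕ) % (2*m)) b / (2*m) := by
        rw [h']
      omega
    · intro x hx
      simp only [Finset.mem_filter, Finset.mem_univ, true_and] at hx
      obtain ⟨hxJ, hxc⟩ := hx
      rw [hJ] at hxJ
      rw [hxc] at hxJ
      obtain ⟨b, hbk2, hbeq⟩ := colRow_surj k m ((c:ℕ) % (2*m)) ((x.1:ℕ)) hm he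
        (by have := x.1.isLt; omega) hxJ
      refine ⟨b, hbk2, ?_⟩
      apply Prod.ext
      · apply Fin.ext
        show colRow m ((c:ℕ) % (2*m)) b % n = (x.1:ℕ)
        rw [hbeq]
        exact Nat.mod_eq_of_lt x.1.isLt
      · exact hxc.symm
  · -- symbols
    intro s
    have hts : (s:ℕ) % (2*m) < 2*m := Nat.mod_lt _ hm0
    have hslt : (s:ℕ) < 2*m*k := by have := s.isLt; omega
    have hrlt : ∀ q, q < k → symRow m ((s:ℕ) % (2*m)) q < n := by
      intro q hq
      by_cases hq0 : q = 0
      · subst hq0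
        have := symRow_zero_lt m ((s:ℕ) % (2*m)) hm hts
        omega
      · obtain ⟨-, h2, -, -⟩ := symRow_facts k τ m ((s:ℕ) % (2*m)) q hm hτ hts (by omega) hq
        omega
    apply card_eq_of_enum _ k
      (fun q => ((⟨symRow m ((s:ℕ) % (2*m)) q % n, Nat.mod_lt _ hn0⟩ : Fin n),
        (⟨(n + (s:ℕ) - symRow m ((s:ℕ) % (2*m)) q) % n, Nat.mod_lt _ hn0⟩ : Fin n)))
    · intro q hq
      have hr := hrlt q hq
      simp only [Finset.mem_filter, Finset.mem_univ, true_and]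
      constructor
      · rw [hJ]
        show ((n + (s:ℕ) - symRow m ((s:ℕ) % (2*m)) q) % n) % (2*m)
          ∈ Dset m (symRow m ((s:ℕ) % (2*m)) q % n)
        rw [Nat.mod_mod_of_dvd _ hdvd, Nat.mod_eq_of_lt hr,
          show n + (s:ℕ) - symRow m ((s:ℕ) % (2*m)) q
            = 2*m*k + (s:ℕ) - symRow m ((s:ℕ) % (2*m)) q by omega]
        exact symRow_mem k τ m (s:ℕ) q hm hτ hslt hq
      · show (symRow m ((s:ℕ) % (2*m)) q % n
            + (n + (s:ℕ) - symRow m ((s:ℕ) % (2*m)) q) % n) % n = (s:ℕ)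
        rw [Nat.mod_eq_of_lt hr]
        exact add_inv_mod n _ _ hr s.isLt
    · intro a ha b hb h
      have h' : symRow m ((s:ℕ) % (2*m)) a % n = symRow m ((s:ℕ) % (2*m)) b % n :=
        congrArg (fun p : Fin n × Fin n => (p.1 : ℕ)) h
      rw [Nat.mod_eq_of_lt (hrlt a ha), Nat.mod_eq_of_lt (hrlt b hb)] at h'
      exact symRow_inj k τ m ((s:ℕ) % (2*m)) hm hτ hts a ha b hb h'
    · intro x hx
      simp only [Finset.mem_filter, Finset.mem_univ, true_and] at hx
      obtain ⟨hxJ, hxs⟩ := hx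
      rw [hJ] at hxJ
      have hx1 := x.1.isLt
      have hx2 := x.2.isLt
      have hc' : (x.2:ℕ) = (n + (s:ℕ) - (x.1:ℕ)) % n :=
        inv_mod_unique n _ _ _ hx1 hx2 s.isLt hxs
      rw [hc', Nat.mod_mod_of_dvd _ hdvd,
        show n + (s:ℕ) - (x.1:ℕ) = 2*m*k + (s:ℕ) - (x.1:ℕ) by omega] at hxJ
      obtain ⟨q, hqk, hqeq⟩ := symRow_surj k τ m (s:ℕ) ((x.1:ℕ)) hm hτ hslt (by omega) hxJ
      refine ⟨q, hqk, ?_⟩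
      apply Prod.ext
      · apply Fin.ext
        show symRow m ((s:ℕ) % (2*m)) q % n = (x.1:ℕ)
        rw [hqeq]
        exact Nat.mod_eq_of_lt hx1
      · apply Fin.ext
        show (n + (s:ℕ) - symRow m ((s:ℕ) % (2*m)) q) % n = (x.2:ℕ)
        rw [hqeq, ← hc']
  · -- row 0
    intro i hi
    apply card_eq_of_enum _ 0 (fun _ => (i, i))
    · intro q hq
      exact absurd hq (Nat.not_lt_zero q)
    · intro a ha b hb h
      exact absurd ha (Nat.not_lt_zero a)
    · intro x hx
      exfalso
      simp only [Finset.mem_filter, Finset.mem_univ, true_and] at hx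
      obtain ⟨hxJ, hxi⟩ := hx
      rw [hJ, hxi, hi] at hxJ
      rw [mem_Dset_iff _ _ _ (by omega)] at hxJ
      omega
  · -- row m
    intro i hi
    apply card_eq_of_enum _ (2*k)
      (fun q => (i, (⟨(2*m*(q/2) + (m - 1 + q % 2)) % n, Nat.mod_lt _ hn0⟩ : Fin n)))
    · intro q hq
      have hq2 : q/2 < k := by omega
      have hms := mulStep m (q/2) k hq2
      have hlt : 2*m*(q/2) + (m - 1 + q % 2) < n := by omega
      have hmod := modHelper m (q/2) (m - 1 + q % 2) (by omega)
      simp only [Finset.mem_filter, Finset.mem_univ, true_and]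
      refine ⟨?_, trivial⟩
      rw [hJ]
      show ((2*m*(q/2) + (m - 1 + q % 2)) % n) % (2*m) ∈ Dset m (i:ℕ)
      rw [Nat.mod_eq_of_lt hlt, hmod, mem_Dset_iff _ _ _ (by omega), hi]
      omega
    · intro a ha b hb h
      have h' : (2*m*(a/2) + (m - 1 + a % 2)) % n = (2*m*(b/2) + (m - 1 + b % 2)) % n :=
        congrArg (fun p : Fin n × Fin n => (p.2 : ℕ)) h
      have hma := mulStep m (a/2) k (by omega)
      have hmb := mulStep m (b/2) k (by omega)
      rw [Nat.mod_eq_of_lt (show 2*m*(a/2) + (m - 1 + a % 2) < n by omega),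
        Nat.mod_eq_of_lt (show 2*m*(b/2) + (m - 1 + b % 2) < n by omega)] at h'
      have da := divHelper m (a/2) (m - 1 + a % 2) (by omega)
      have db := divHelper m (b/2) (m - 1 + b % 2) (by omega)
      have ma' := modHelper m (a/2) (m - 1 + a % 2) (by omega)
      have mb' := modHelper m (b/2) (m - 1 + b % 2) (by omega)
      have e1 : (2*m*(a/2) + (m - 1 + a % 2)) / (2*m) = (2*m*(b/2) + (m - 1 + b % 2)) / (2*m) := by
        rw [h']
      have e2 : (2*m*(a/2) + (m - 1 + a % 2)) % (2*m) = (2*m*(b/2) + (m - 1 + b % 2)) % (2*m) := by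
        rw [h']
      omega
    · intro x hx
      simp only [Finset.mem_filter, Finset.mem_univ, true_and] at hx
      obtain ⟨hxJ, hxi⟩ := hx
      rw [hJ, hxi, hi] at hxJ
      rw [mem_Dset_iff _ _ _ (by omega)] at hxJ
      have hdm := Nat.div_add_mod ((x.2:ℕ)) (2*m)
      have hx2 := x.2.isLt
      have hmlt : (x.2:ℕ) % (2*m) < 2*m := Nat.mod_lt _ hm0
      have hjk : (x.2:ℕ)/(2*m) < k := (Nat.div_lt_iff_lt_mul hm0).2 (by omega)
      refine ⟨2*((x.2:ℕ)/(2*m)) + ((x.2:ℕ) % (2*m) - (m-1)), by omega, ?_⟩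
      apply Prod.ext
      · exact hxi.symm
      · apply Fin.ext
        have hq2 : (2*((x.2:ℕ)/(2*m)) + ((x.2:ℕ) % (2*m) - (m-1)))/2 = (x.2:ℕ)/(2*m) := by
          omega
        have link : 2*m*((2*((x.2:ℕ)/(2*m)) + ((x.2:ℕ) % (2*m) - (m-1)))/2)
            = 2*m*((x.2:ℕ)/(2*m)) := by rw [hq2]
        have hlt2 : 2*m*((2*((x.2:ℕ)/(2*m)) + ((x.2:ℕ) % (2*m) - (m-1)))/2)
            + (m - 1 + (2*((x.2:ℕ)/(2*m)) + ((x.2:ℕ) % (2*m) - (m-1))) % 2) < n := by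
          have := mulStep m ((x.2:ℕ)/(2*m)) k hjk
          omega
        show (2*m*((2*((x.2:ℕ)/(2*m)) + ((x.2:ℕ) % (2*m) - (m-1)))/2)
            + (m - 1 + (2*((x.2:ℕ)/(2*m)) + ((x.2:ℕ) % (2*m) - (m-1))) % 2)) % n = (x.2:ℕ)
        rw [Nat.mod_eq_of_lt hlt2]
        omega
  · -- generic rows
    intro i hi0 him
    obtain ⟨d, hd, hiff⟩ : ∃ d, d < 2*m ∧ ∀ e, e ∈ Dset m (i:ℕ) ↔ e = d := by
      by_cases h1 : (i:ℕ) < 2*m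
      · by_cases h2 : (i:ℕ) < m
        · exact ⟨(i:ℕ)-1, by omega, fun e => by rw [mem_Dset_iff _ _ _ (by omega)]; omega⟩
        · exact ⟨(i:ℕ), by omega, fun e => by rw [mem_Dset_iff _ _ _ (by omega)]; omega⟩
      · by_cases h2 : ((i:ℕ)/(2*m)) % 2 = 1
        · exact ⟨(i:ℕ) % (2*m), Nat.mod_lt _ hm0,
            fun e => by rw [mem_Dset_iff _ _ _ (by omega)]; omega⟩
        · exact ⟨((i:ℕ) % (2*m)+1) % (2*m), Nat.mod_lt _ hm0,
            fun e => by rw [mem_Dset_iff _ _ _ (by omega)]; omega⟩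
    apply card_eq_of_enum _ k
      (fun j => (i, (⟨(2*m*j + d) % n, Nat.mod_lt _ hn0⟩ : Fin n)))
    · intro q hq
      have hms := mulStep m q k hq
      have hlt : 2*m*q + d < n := by omega
      have hmod := modHelper m q d hd
      simp only [Finset.mem_filter, Finset.mem_univ, true_and]
      refine ⟨?_, trivial⟩
      rw [hJ]
      show ((2*m*q + d) % n) % (2*m) ∈ Dset m (i:ℕ)
      rw [Nat.mod_eq_of_lt hlt, hmod, hiff]
    · intro a ha b hb h
      have h' : (2*m*a + d) % n = (2*m*b + d) % n :=
        congrArg (fun p : Fin n × Fin n => (p.2 : ℕ)) h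
      have hma := mulStep m a k ha
      have hmb := mulStep m b k hb
      rw [Nat.mod_eq_of_lt (show 2*m*a + d < n by omega),
        Nat.mod_eq_of_lt (show 2*m*b + d < n by omega)] at h'
      have da := divHelper m a d hd
      have db := divHelper m b d hd
      have e1 : (2*m*a + d)/(2*m) = (2*m*b + d)/(2*m) := by rw [h']
      omega
    · intro x hx
      simp only [Finset.mem_filter, Finset.mem_univ, true_and] at hx
      obtain ⟨hxJ, hxi⟩ := hx
      rw [hJ, hxi] at hxJ
      rw [hiff] at hxJ
      have hdm := Nat.div_add_mod ((x.2:ℕ)) (2*m)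
      have hx2 := x.2.isLt
      have hjk : (x.2:ℕ)/(2*m) < k := (Nat.div_lt_iff_lt_mul hm0).2 (by omega)
      refine ⟨(x.2:ℕ)/(2*m), hjk, ?_⟩
      apply Prod.ext
      · exact hxi.symm
      · apply Fin.ext
        have hlt2 : 2*m*((x.2:ℕ)/(2*m)) + d < n := by
          have := mulStep m ((x.2:ℕ)/(2*m)) k hjk
          omega
        show (2*m*((x.2:ℕ)/(2*m)) + d) % n = (x.2:ℕ)
        rw [Nat.mod_eq_of_lt hlt2]
        omega
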